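/- A finite simple graph G satisfies p(G; z) = m(G; z) (the perfectly matchable set polynomial equals the matching polynomial) if and only if G contains no cycle of even length. -/

import Mathlib

open Polynomial

variable {V : Type*}

/-- `M` (a finite set of edges) is a matching of the graph `G`:
its members are edges of `G` and no two distinct members share an endpoint. -/
def IsGraphMatching (G : SimpleGraph V) (M : Finset (Sym2 V)) : Prop :=
  (M : Set (Sym2 V)) ⊆ G.edgeSet ∧
    ∀ e ∈ M, ∀ f ∈ M, e ≠ f → ∀ x, x ∈ e → x ∉ f

/-- The set of vertices covered by the edge set `M` is exactly `S`. -/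
def Covers (M : Finset (Sym2 V)) (S : Finset V) : Prop :=
  ∀ x, x ∈ S ↔ ∃ e ∈ M, x ∈ e

/-- `M` is a perfect matching of the induced subgraph `G[S]`. -/
def IsPerfectMatchingOn (G : SimpleGraph V) (M : Finset (Sym2 V)) (S : Finset V) : Prop :=
  IsGraphMatching G M ∧ Covers M S

/-- `S` is a perfectly matchable set of `G`. -/
def IsPMS (G : SimpleGraph V) (S : Finset V) : Prop :=
  ∃ M, IsPerfectMatchingOn G M S

open Classical in
/-- The perfectly matchable set polynomial of the subgraph of `G` induced on the
ground vertex set `A`: the generating function `∑ p_{2k} z^k` where `p_{2k}` is the number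
of perfectly matchable sets `S ⊆ A` with `|S| = 2k`. -/
noncomputable def pmPoly [Fintype V] (G : SimpleGraph V) (A : Finset V) : Polynomial ℤ :=
  ∑ S ∈ A.powerset, if IsPMS G S then X ^ (S.card / 2) else 0

/-- `G` has no cycle of even length. -/
def NoEvenCycle (G : SimpleGraph V) : Prop :=
  ∀ (v : V) (c : G.Walk v v), c.IsCycle → ¬ Even c.length

open Classical in
/-- The matching polynomial `m(G; z) = ∑ m_k z^k`, where `m_k` is the number
of matchings of `G` with exactly `k` edges. -/
noncomputable def matchPoly [Fintype V] [DecidableEq V] (G : SimpleGraph V) : Polynomial ℤ :=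
  ∑ M : Finset (Sym2 V), if IsGraphMatching G M then X ^ M.card else 0

section Aux

variable {G : SimpleGraph V} {M M' N : Finset (Sym2 V)} {S S' : Finset V}

lemma matching_unique_edge (hM : IsGraphMatching G M) {e f : Sym2 V} (he : e ∈ M) (hf : f ∈ M)
    {x : V} (hxe : x ∈ e) (hxf : x ∈ f) : e = f := by
  by_contra h
  exact hM.2 e he f hf h x hxe hxf

lemma covers_eq (h : Covers M S) (h' : Covers M S') : S = S' :=
  Finset.ext fun x => (h x).trans (h' x).symm

lemma sym2_exists (e : Sym2 V) : ∃ a b, e = s(a, b) :=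
  Sym2.ind (fun a b => ⟨a, b, rfl⟩) e

lemma matching_subset (hM : IsGraphMatching G M) (h : N ⊆ M) : IsGraphMatching G N :=
  ⟨fun e he => hM.1 (h he), fun e he f hf hne x hxe hxf => hM.2 e (h he) f (h hf) hne x hxe hxf⟩

lemma covers_card (hM : IsGraphMatching G M) (hS : Covers M S) :
    S.card = 2 * M.card := by
  classical
  induction M using Finset.induction generalizing S with
  | empty =>
      have : S = ∅ := Finset.eq_empty_iff_forall_notMem.2 fun x hx => by
        obtain ⟨e, he, -⟩ := (hS x).1 hx
        simp at he
      simp [this]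
  | @insert e M hnm ih =>
      have hM' : IsGraphMatching G M := matching_subset hM (Finset.subset_insert _ _)
      obtain ⟨a, b, rfl⟩ := sym2_exists e
      have heE : s(a, b) ∈ G.edgeSet := hM.1 (Finset.mem_insert_self _ _)
      have hab : a ≠ b := by
        intro h
        exact G.not_isDiag_of_mem_edgeSet heE (by simp [h])
      set S' := S.filter (fun x => x ∉ s(a, b)) with hS'def
      have hcov' : Covers M S' := by
        intro x
        simp only [hS'def, Finset.mem_filter]
        constructor
        · rintro ⟨hxS, hxe⟩
          obtain ⟨f, hf, hxf⟩ := (hS x).1 hxS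
          rcases Finset.mem_insert.1 hf with rfl | hf
          · exact absurd hxf hxe
          · exact ⟨f, hf, hxf⟩
        · rintro ⟨f, hf, hxf⟩
          refine ⟨(hS x).2 ⟨f, Finset.mem_insert_of_mem hf, hxf⟩, ?_⟩
          intro hxe
          have : s(a, b) ≠ f := by rintro rfl; exact hnm hf
          exact hM.2 _ (Finset.mem_insert_self _ _) f (Finset.mem_insert_of_mem hf) this x hxe hxf
      have hfilter : S.filter (fun x => x ∈ s(a, b)) = {a, b} := by
        ext x
        simp only [Finset.mem_filter, Finset.mem_insert, Finset.mem_singleton, Sym2.mem_iff]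
        constructor
        · rintro ⟨-, h⟩; exact h
        · rintro (h | h)
          · exact ⟨(hS x).2 ⟨s(a, b), Finset.mem_insert_self _ _, by simp [h]⟩, Or.inl h⟩
          · exact ⟨(hS x).2 ⟨s(a, b), Finset.mem_insert_self _ _, by simp [h]⟩, Or.inr h⟩
      have hsplit := Finset.card_filter_add_card_filter_not
        (s := S) (p := fun x => x ∈ s(a, b))
      rw [hfilter, ← hS'def] at hsplit
      have hpair : ({a, b} : Finset V).card = 2 := Finset.card_pair hab
      have hS'c : S'.card = 2 * M.card := ih hM' hcov'
      have hcard : (insert s(a,b) M).card = M.card + 1 := Finset.card_insert_of_notMem hnm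
      omega

end Aux

section Walks

open SimpleGraph

variable {G : SimpleGraph V}

def buildWalk (G : SimpleGraph V) (x : ℕ → V) :
    ∀ (n : ℕ), (∀ t, t < n → G.Adj (x t) (x (t + 1))) → G.Walk (x 0) (x n)
  | 0, _ => SimpleGraph.Walk.nil
  | n + 1, h =>
      (buildWalk G x n fun t ht => h t (Nat.lt_succ_of_lt ht)).concat
        (h n (Nat.lt_succ_self n))

lemma buildWalk_length (x : ℕ → V) (n : ℕ) (h : ∀ t, t < n → G.Adj (x t) (x (t + 1))) :
    (buildWalk G x n h).length = n := by
  induction n with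
  | zero => rfl
  | succ n ih => simp [buildWalk, ih]

lemma buildWalk_support (x : ℕ → V) (n : ℕ) (h : ∀ t, t < n → G.Adj (x t) (x (t + 1))) :
    (buildWalk G x n h).support = (List.range (n + 1)).map x := by
  induction n with
  | zero => rfl
  | succ n ih =>
      simp only [buildWalk, SimpleGraph.Walk.support_concat, ih, List.concat_eq_append,
        List.range_succ (n := n + 1), List.map_append]
      rfl

lemma buildWalk_edges (x : ℕ → V) (n : ℕ) (h : ∀ t, t < n → G.Adj (x t) (x (t + 1))) :
    (buildWalk G x n h).edges = (List.range n).map (fun t => s(x t, x (t + 1))) := by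
  induction n with
  | zero => rfl
  | succ n ih =>
      simp only [buildWalk, SimpleGraph.Walk.edges_concat, ih, List.concat_eq_append,
        List.range_succ (n := n), List.map_append]
      rfl

lemma getVert_support_getElem? {u w : V} (p : G.Walk u w) :
    ∀ i, i ≤ p.length → p.support[i]? = some (p.getVert i) := by
  induction p with
  | nil =>
      intro i hi
      simp only [SimpleGraph.Walk.length_nil, Nat.le_zero] at hi
      subst hi
      simp [SimpleGraph.Walk.getVert]
  | cons h p ih =>
      intro i hi
      cases i with
      | zero => simp [SimpleGraph.Walk.getVert]
      | succ i =>
          rw [SimpleGraph.Walk.support_cons]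
          simpa [SimpleGraph.Walk.getVert_cons_succ] using
            ih i (by simpa [SimpleGraph.Walk.length_cons] using hi)

end Walks

section Core

open SimpleGraph

variable {G : SimpleGraph V}

open Classical in
noncomputable def pmStep [DecidableEq V] (M M' : Finset (Sym2 V)) (p : V × Sym2 V) :
    V × Sym2 V :=
  if h : ∃ f, (f ∈ M ∨ f ∈ M') ∧ p.1 ∈ f ∧ f ≠ p.2 then
    (Sym2.Mem.other' h.choose_spec.2.1, h.choose)
  else p

lemma pmStep_spec [DecidableEq V] {M M' : Finset (Sym2 V)} {p : V × Sym2 V}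
    (h : ∃ f, (f ∈ M ∨ f ∈ M') ∧ p.1 ∈ f ∧ f ≠ p.2) :
    ((pmStep M M' p).2 ∈ M ∨ (pmStep M M' p).2 ∈ M') ∧ (pmStep M M' p).2 ≠ p.2 ∧
      (pmStep M M' p).2 = s(p.1, (pmStep M M' p).1) := by
  unfold pmStep
  rw [dif_pos h]
  obtain ⟨h1, h2, h3⟩ := h.choose_spec
  exact ⟨h1, h3, (Sym2.other_spec' h2).symm⟩

lemma exists_even_cycle [Fintype V] [DecidableEq V] {M M' : Finset (Sym2 V)}
    (hM : IsGraphMatching G M) (hM' : IsGraphMatching G M')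
    (hdisj : ∀ e ∈ M, e ∉ M')
    (hcov : ∀ x : V, (∃ e ∈ M, x ∈ e) ↔ (∃ e ∈ M', x ∈ e))
    (hne : M.Nonempty) :
    ∃ (v : V) (c : G.Walk v v), c.IsCycle ∧ Even c.length := by
  classical
  obtain ⟨e1, he1⟩ := hne
  obtain ⟨a, b, rfl⟩ := sym2_exists e1
  have hab : a ≠ b := fun h => G.not_isDiag_of_mem_edgeSet (hM.1 he1) (by simp [h])
  set st : ℕ → V × Sym2 V := fun n => (pmStep M M')^[n] (b, s(a, b)) with hst
  have hst_succ : ∀ n, st (n + 1) = pmStep M M' (st n) := fun n =>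
    Function.iterate_succ_apply' _ _ _
  set vert : ℕ → V := fun n => Nat.rec a (fun k _ => (st k).1) n with hvert
  have hvert0 : vert 0 = a := rfl
  have hvertS : ∀ n, vert (n + 1) = (st n).1 := fun n => rfl
  have key : ∀ n, (st n).2 = s(vert n, vert (n + 1)) ∧
      ((Even n → (st n).2 ∈ M) ∧ (¬ Even n → (st n).2 ∈ M')) := by
    intro n
    induction n with
    | zero => exact ⟨rfl, fun _ => he1, fun h => absurd Even.zero h⟩
    | succ n ih =>
        obtain ⟨hE, hpar⟩ := ih
        have hvmem : (st n).1 ∈ (st n).2 := by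
          rw [hE]; rw [hvertS n]; simp
        have hex : ∃ f, (f ∈ M ∨ f ∈ M') ∧ (st n).1 ∈ f ∧ f ≠ (st n).2 := by
          by_cases hn : Even n
          · have h1 : (st n).2 ∈ M := hpar.1 hn
            obtain ⟨f, hf, hvf⟩ := (hcov ((st n).1)).1 ⟨(st n).2, h1, hvmem⟩
            exact ⟨f, Or.inr hf, hvf, fun h => hdisj _ h1 (h ▸ hf)⟩
          · have h1 : (st n).2 ∈ M' := hpar.2 hn
            obtain ⟨f, hf, hvf⟩ := (hcov ((st n).1)).2 ⟨(st n).2, h1, hvmem⟩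
            exact ⟨f, Or.inl hf, hvf, fun h => hdisj f hf (h ▸ h1)⟩
        have hspec := pmStep_spec hex
        rw [← hst_succ n] at hspec
        obtain ⟨hmem, hne2, heq⟩ := hspec
        refine ⟨by rw [heq, hvertS n, hvertS (n + 1)], ?_, ?_⟩
        · intro hev
          rcases hmem with h | h
          · exact h
          · have hn : ¬ Even n := by
              rw [Nat.even_add_one] at hev; exact fun hn => hev hn
            have h1 : (st n).2 ∈ M' := hpar.2 hn
            have hv2 : (st n).1 ∈ (st (n + 1)).2 := by rw [heq]; simp
            exact absurd (matching_unique_edge hM' h h1 hv2 hvmem) hne2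
        · intro hodd
          rcases hmem with h | h
          · have hn : Even n := by
              rw [Nat.even_add_one, not_not] at hodd; exact hodd
            have h1 : (st n).2 ∈ M := hpar.1 hn
            have hv2 : (st n).1 ∈ (st (n + 1)).2 := by rw [heq]; simp
            exact absurd (matching_unique_edge hM h h1 hv2 hvmem) hne2
          · exact h
  have hEdge : ∀ n, (st n).2 = s(vert n, vert (n + 1)) := fun n => (key n).1
  have hEdgeMem : ∀ n, (st n).2 ∈ M ∨ (st n).2 ∈ M' := fun n => by
    by_cases h : Even n
    exacts [Or.inl ((key n).2.1 h), Or.inr ((key n).2.2 h)]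
  have hadj : ∀ n, G.Adj (vert n) (vert (n + 1)) := by
    intro n
    have hE : (st n).2 ∈ G.edgeSet := by
      rcases hEdgeMem n with h | h
      exacts [hM.1 h, hM'.1 h]
    rw [hEdge n] at hE
    exact hE
  have hne_adj : ∀ n, vert n ≠ vert (n + 1) := fun n => (hadj n).ne
  have hEconsec : ∀ n, (st n).2 ≠ (st (n + 1)).2 := by
    intro n
    by_cases h : Even n
    · have h1 := (key n).2.1 h
      have h2 := (key (n + 1)).2.2 (by simp [Nat.even_add_one, h])
      exact fun he => hdisj _ h1 (he ▸ h2)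
    · have h1 := (key n).2.2 h
      have h2 := (key (n + 1)).2.1 (by simpa [Nat.even_add_one] using h)
      exact fun he => hdisj _ h2 (he ▸ h1)
  have atVert : ∀ n g, (g ∈ M ∨ g ∈ M') → vert (n + 1) ∈ g →
      g = (st n).2 ∨ g = (st (n + 1)).2 := by
    intro n g hg hvg
    have hv1 : vert (n + 1) ∈ (st n).2 := by rw [hEdge n]; simp
    have hv2 : vert (n + 1) ∈ (st (n + 1)).2 := by rw [hEdge (n + 1)]; simp
    by_cases h : Even n
    · have h1 := (key n).2.1 h
      have h2 := (key (n + 1)).2.2 (by simp [Nat.even_add_one, h])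
      rcases hg with hgM | hgM'
      · exact Or.inl (matching_unique_edge hM hgM h1 hvg hv1)
      · exact Or.inr (matching_unique_edge hM' hgM' h2 hvg hv2)
    · have h1 := (key n).2.2 h
      have h2 := (key (n + 1)).2.1 (by simpa [Nat.even_add_one] using h)
      rcases hg with hgM | hgM'
      · exact Or.inr (matching_unique_edge hM hgM h2 hvg hv2)
      · exact Or.inl (matching_unique_edge hM' hgM' h1 hvg hv1)
  obtain ⟨f0, hf0M', haf0⟩ := (hcov a).1 ⟨s(a, b), he1, by simp⟩
  have hst02 : (st 0).2 = s(a, b) := rfl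
  have atVert0 : ∀ g, (g ∈ M ∨ g ∈ M') → a ∈ g → g = (st 0).2 ∨ g = f0 := by
    intro g hg hvg
    rcases hg with hgM | hgM'
    · exact Or.inl (matching_unique_edge hM hgM (hst02 ▸ he1) hvg (by rw [hst02]; simp))
    · exact Or.inr (matching_unique_edge hM' hgM' hf0M' hvg haf0)
  -- first repeated vertex
  have hcol : ∃ j, ∃ i, i < j ∧ vert i = vert j := by
    obtain ⟨i, j, hij, hv⟩ := Finite.exists_ne_map_eq_of_infinite vert
    rcases lt_or_gt_of_ne hij with h | h
    exacts [⟨j, i, h, hv⟩, ⟨i, j, h, hv.symm⟩]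
  obtain ⟨J, ⟨i, hiJ, hvij⟩, hJmin⟩ :
      ∃ J, (∃ i, i < J ∧ vert i = vert J) ∧ ∀ k, k < J → ¬ ∃ i, i < k ∧ vert i = vert k :=
    ⟨Nat.find hcol, Nat.find_spec hcol, fun k hk => Nat.find_min hcol hk⟩
  have hmin : ∀ i' j', i' < j' → j' < J → vert i' ≠ vert j' := by
    intro i' j' h1 h2 hv
    exact (hJmin j' h2) ⟨i', h1, hv⟩
  have hi0 : i = 0 := by
    by_contra h0
    obtain ⟨i', rfl⟩ : ∃ i', i = i' + 1 := ⟨i - 1, by omega⟩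
    obtain ⟨J', hJ'⟩ : ∃ J', J = J' + 1 := ⟨J - 1, by omega⟩
    subst hJ'
    have harr : vert (i' + 1) ∈ (st J').2 := by
      rw [hEdge J', hvij]; simp
    rcases atVert i' _ (hEdgeMem J') harr with hc | hc
    · have heq2 : s(vert J', vert (J' + 1)) = s(vert i', vert (i' + 1)) := by
        rw [← hEdge J', hc, hEdge i']
      rcases Sym2.eq_iff.1 heq2 with ⟨h1, h2⟩ | ⟨h1, h2⟩
      · exact hmin i' J' (by omega) (by omega) h1.symm
      · exact hne_adj i' (hvij.trans h2).symm
    · have heq2 : s(vert J', vert (J' + 1)) = s(vert (i' + 1), vert (i' + 2)) := by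
        rw [← hEdge J', hc, hEdge (i' + 1)]
      rcases Sym2.eq_iff.1 heq2 with ⟨h1, h2⟩ | ⟨h1, h2⟩
      · exact hne_adj J' (h1.trans hvij)
      · rcases lt_trichotomy (i' + 2) J' with hlt | heq | hgt
        · exact hmin (i' + 2) J' hlt (by omega) h1.symm
        · refine hEconsec (i' + 1) ?_
          rw [← heq] at hc
          exact hc.symm
        · have hJi : J' = i' + 1 := by omega
          subst hJi
          exact hne_adj (i' + 1) h1
  subst hi0
  have hvJ0 : vert J = vert 0 := hvij.symm
  have hJ3 : 3 ≤ J := by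
    by_contra h3
    interval_cases J
    · exact hne_adj 0 hvij
    · refine hEconsec 0 ?_
      rw [hEdge 0, hEdge 1]
      show s(vert 0, vert 1) = s(vert 1, vert 2)
      rw [hvJ0]
      exact Sym2.eq_swap
  obtain ⟨J', rfl⟩ : ∃ J', J = J' + 1 := ⟨J - 1, by omega⟩
  have harr : a ∈ (st J').2 := by
    rw [hEdge J']
    rw [show vert (J' + 1) = a from hvJ0.trans hvert0]
    simp
  have hJeven : Even (J' + 1) := by
    rcases atVert0 _ (hEdgeMem J') harr with hc | hc
    · have heq2 : s(vert J', vert (J' + 1)) = s(vert 0, vert 1) := by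
        rw [← hEdge J', hc, hEdge 0]
        show s(vert 0, vert 1) = s(vert 0, vert 1)
        rfl
      rcases Sym2.eq_iff.1 heq2 with ⟨h1, h2⟩ | ⟨h1, h2⟩
      · exact absurd (hvJ0.symm.trans h2) (hne_adj 0)
      · exact absurd h1.symm (hmin 1 J' (by omega) (by omega))
    · have hpar : ¬ Even J' := fun h => hdisj _ ((key J').2.1 h) (hc ▸ hf0M')
      simpa [Nat.even_add_one] using hpar
  -- build the cycle
  have hadj' : ∀ t, t < J' → G.Adj (vert (t + 1)) (vert (t + 1 + 1)) := fun t _ => hadj (t + 1)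
  have hinj : ∀ t t', t ≤ J' → t' ≤ J' → vert (t + 1) = vert (t' + 1) → t = t' := by
    intro t t' h1 h2 hvv
    by_contra hne'
    rcases lt_or_gt_of_ne hne' with h | h
    · rcases lt_or_eq_of_le h2 with h2' | rfl
      · exact hmin (t + 1) (t' + 1) (by omega) (by omega) hvv
      · exact hmin 0 (t + 1) (by omega) (by omega) (hvJ0.symm.trans hvv.symm)
    · rcases lt_or_eq_of_le h1 with h1' | rfl
      · exact hmin (t' + 1) (t + 1) (by omega) (by omega) hvv.symm
      · exact hmin 0 (t' + 1) (by omega) (by omega) (hvJ0.symm.trans hvv)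
  refine ⟨vert 0, SimpleGraph.Walk.cons (hadj 0)
    ((buildWalk G (fun t => vert (t + 1)) J' hadj').copy rfl hvJ0), ?_, ?_⟩
  · rw [SimpleGraph.Walk.cons_isCycle_iff]
    constructor
    · rw [SimpleGraph.Walk.isPath_def, SimpleGraph.Walk.support_copy, buildWalk_support]
      refine List.Nodup.map_on ?_ List.nodup_range
      intro t ht t' ht' hvv
      exact hinj t t' (Nat.lt_succ_iff.1 (List.mem_range.1 ht))
        (Nat.lt_succ_iff.1 (List.mem_range.1 ht')) hvv
    · rw [SimpleGraph.Walk.edges_copy, buildWalk_edges]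
      intro hmem
      obtain ⟨t, ht, hteq⟩ := List.mem_map.1 hmem
      have ht' : t < J' := List.mem_range.1 ht
      rcases Sym2.eq_iff.1 hteq with ⟨h1, h2⟩ | ⟨h1, h2⟩
      · exact hmin 0 (t + 1) (by omega) (by omega) h1.symm
      · rcases Nat.eq_or_lt_of_le (Nat.one_le_iff_ne_zero.2 (by omega) : 1 ≤ t + 1) with h1' | h1'
        · have ht0 : t = 0 := by omega
          subst ht0
          exact hmin 0 2 (by omega) (by omega) h2.symm
        · exact hmin 1 (t + 1) (by omega) (by omega) h1.symm
  · rw [SimpleGraph.Walk.length_cons, SimpleGraph.Walk.length_copy, buildWalk_length]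
    exact hJeven

end Core

section Wrap

variable {G : SimpleGraph V} {M M' : Finset (Sym2 V)} {S : Finset V}

lemma matching_eq_of_covers [Fintype V] [DecidableEq V] (hno : NoEvenCycle G)
    (hM : IsGraphMatching G M) (hM' : IsGraphMatching G M')
    (h : Covers M S) (h' : Covers M' S) : M = M' := by
  classical
  by_contra hne
  set D := M \ M' with hD
  set D' := M' \ M with hD'
  have hDM : IsGraphMatching G D := matching_subset hM (Finset.sdiff_subset)
  have hD'M : IsGraphMatching G D' := matching_subset hM' (Finset.sdiff_subset)
  have hdisj : ∀ e ∈ D, e ∉ D' := by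
    intro e he he'
    rw [hD, Finset.mem_sdiff] at he
    rw [hD', Finset.mem_sdiff] at he'
    exact he.2 he'.1
  have hcov : ∀ x : V, (∃ e ∈ D, x ∈ e) ↔ (∃ e ∈ D', x ∈ e) := by
    have main : ∀ (N N' : Finset (Sym2 V)), IsGraphMatching G N → IsGraphMatching G N' →
        Covers N S → Covers N' S → ∀ x, (∃ e ∈ N \ N', x ∈ e) → ∃ e ∈ N' \ N, x ∈ e := by
      intro N N' hN hN' hcN hcN' x ⟨e, he, hxe⟩
      rw [Finset.mem_sdiff] at he
      have hxS : x ∈ S := (hcN x).2 ⟨e, he.1, hxe⟩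
      obtain ⟨f, hf, hxf⟩ := (hcN' x).1 hxS
      have hfe : f ≠ e := fun hfe => he.2 (hfe ▸ hf)
      have hfN : f ∉ N := fun hfN => hN.2 e he.1 f hfN hfe.symm x hxe hxf
      exact ⟨f, Finset.mem_sdiff.2 ⟨hf, hfN⟩, hxf⟩
    intro x
    constructor
    · exact main M M' hM hM' h h' x
    · exact main M' M hM' hM h' h x
  rcases Finset.eq_empty_or_nonempty D with hDe | hDne
  · have hD'e : D' = ∅ := by
      rw [Finset.eq_empty_iff_forall_notMem]
      intro e he
      obtain ⟨a, b, rfl⟩ := sym2_exists e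
      obtain ⟨f, hf, hxf⟩ := (hcov a).2 ⟨s(a, b), he, by simp⟩
      rw [hDe] at hf
      simp at hf
    apply hne
    have h1 : M ⊆ M' := by rwa [← Finset.sdiff_eq_empty_iff_subset]
    have h2 : M' ⊆ M := by rwa [← Finset.sdiff_eq_empty_iff_subset]
    exact Finset.Subset.antisymm h1 h2
  · obtain ⟨v, c, hcyc, heven⟩ := exists_even_cycle hDM hD'M hdisj hcov hDne
    exact hno v c hcyc heven

lemma two_matchings_of_even_cycle [DecidableEq V] {v : V} (c : G.Walk v v)
    (hc : c.IsCycle) (he : Even c.length) :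
    ∃ (S : Finset V) (M M' : Finset (Sym2 V)), M ≠ M' ∧
      IsPerfectMatchingOn G M S ∧ IsPerfectMatchingOn G M' S := by
  classical
  obtain ⟨m, hm⟩ := he
  have hn : c.length = 2 * m := by omega
  have h3 : 3 ≤ c.length := hc.three_le_length
  have hm2 : 2 ≤ m := by omega
  set x : ℕ → V := fun t => c.getVert t with hx
  have hx0 : x 0 = v := c.getVert_zero
  have hxn : x c.length = v := c.getVert_length
  -- injectivity on [1, length]
  have hinj1 : ∀ i j, 1 ≤ i → i ≤ c.length → 1 ≤ j → j ≤ c.length → x i = x j → i = j := by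
    intro i j hi1 hi2 hj1 hj2 hxy
    have htail : c.support.tail.Nodup := (c.isCycle_def.1 hc).2.2
    have hlen : c.support.length = c.length + 1 := c.length_support
    have htlen : c.support.tail.length = c.length := by
      rw [List.length_tail, hlen]; omega
    have hgeti : c.support.tail[i - 1]? = some (x i) := by
      rw [List.getElem?_tail, show i - 1 + 1 = i by omega]
      exact getVert_support_getElem? c i hi2
    have hgetj : c.support.tail[j - 1]? = some (x j) := by
      rw [List.getElem?_tail, show j - 1 + 1 = j by omega]
      exact getVert_support_getElem? c j hj2
    have := (List.getElem?_inj (l := c.support.tail) (i := i - 1) (j := j - 1)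
      (by omega) htail).1 (by rw [hgeti, hgetj, hxy])
    omega
  -- injectivity on [0, length - 1]
  have hinj0 : ∀ i j, i < c.length → j < c.length → x i = x j → i = j := by
    intro i j hi hj hxy
    rcases Nat.eq_zero_or_pos i with rfl | hi1
    · rcases Nat.eq_zero_or_pos j with rfl | hj1
      · rfl
      · have : x c.length = x j := by rw [hxn, ← hx0, hxy]
        have := hinj1 c.length j (by omega) le_rfl (by omega) (by omega) this
        omega
    · rcases Nat.eq_zero_or_pos j with rfl | hj1
      · have : x i = x c.length := by rw [hxn, ← hx0, ← hxy]
        have := hinj1 i c.length (by omega) (by omega) (by omega) le_rfl this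
        omega
      · exact hinj1 i j (by omega) (by omega) (by omega) (by omega) hxy
  have hadj : ∀ t, t < c.length → G.Adj (x t) (x (t + 1)) := fun t ht => c.adj_getVert_succ ht
  refine ⟨(Finset.range (2 * m)).image x,
    (Finset.range m).image (fun k => s(x (2 * k), x (2 * k + 1))),
    (Finset.range m).image (fun k => s(x (2 * k + 1), x (2 * k + 2))), ?_, ?_, ?_⟩
  · -- M ≠ M'
    intro hMeq
    have h01 : s(x 0, x 1) ∈ (Finset.range m).image (fun k => s(x (2 * k), x (2 * k + 1))) :=
      Finset.mem_image.2 ⟨0, Finset.mem_range.2 (by omega), by norm_num⟩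
    rw [hMeq] at h01
    obtain ⟨k, hk, hkeq⟩ := Finset.mem_image.1 h01
    rw [Finset.mem_range] at hk
    rcases Sym2.eq_iff.1 hkeq with ⟨h1, h2⟩ | ⟨h1, h2⟩
    · -- x (2k+1) = x 0 = x n, with 1 ≤ 2k+1 ≤ n ⇒ 2k+1 = n even: contradiction
      have : x (2 * k + 1) = x c.length := h1.trans (hx0.trans hxn.symm)
      have := hinj1 (2 * k + 1) c.length (by omega) (by omega) (by omega) le_rfl this
      omega
    · -- x (2k+1) = x 1 ⇒ 2k+1 = 1 ⇒ k = 0; then x 2 = x 0 = x n ⇒ 2 = n, contra 3 ≤ n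
      have hk0 := hinj1 (2 * k + 1) 1 (by omega) (by omega) (by omega) (by omega) h1
      have hk0' : k = 0 := by omega
      subst hk0'
      have : x 2 = x c.length := h2.trans (hx0.trans hxn.symm)
      have := hinj1 2 c.length (by omega) (by omega) (by omega) le_rfl this
      omega
  · -- M is a perfect matching on S
    refine ⟨⟨?_, ?_⟩, ?_⟩
    · intro e hee
      obtain ⟨k, hk, rfl⟩ := Finset.mem_image.1 hee
      rw [Finset.mem_range] at hk
      exact hadj (2 * k) (by omega)
    · intro e hee f hff hef y hye hyf
      obtain ⟨k, hk, rfl⟩ := Finset.mem_image.1 hee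
      obtain ⟨l, hl, rfl⟩ := Finset.mem_image.1 hff
      rw [Finset.mem_range] at hk hl
      have hkl : k = l := by
        rcases Sym2.mem_iff.1 hye with rfl | rfl <;> rcases Sym2.mem_iff.1 hyf with h | h
        · have := hinj0 (2 * k) (2 * l) (by omega) (by omega) h; omega
        · have := hinj0 (2 * k) (2 * l + 1) (by omega) (by omega) h; omega
        · have := hinj0 (2 * k + 1) (2 * l) (by omega) (by omega) h; omega
        · have := hinj0 (2 * k + 1) (2 * l + 1) (by omega) (by omega) h; omega
      exact hef (by rw [hkl])
    · intro y
      constructor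
      · intro hy
        obtain ⟨t, ht, rfl⟩ := Finset.mem_image.1 hy
        rw [Finset.mem_range] at ht
        rcases Nat.even_or_odd t with ⟨k, hk⟩ | ⟨k, hk⟩
        · refine ⟨s(x (2 * k), x (2 * k + 1)),
            Finset.mem_image.2 ⟨k, Finset.mem_range.2 (by omega), rfl⟩, ?_⟩
          rw [show 2 * k = t by omega]
          simp
        · refine ⟨s(x (2 * k), x (2 * k + 1)),
            Finset.mem_image.2 ⟨k, Finset.mem_range.2 (by omega), rfl⟩, ?_⟩
          rw [show 2 * k + 1 = t by omega]
          simp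
      · rintro ⟨e, hee, hye⟩
        obtain ⟨k, hk, rfl⟩ := Finset.mem_image.1 hee
        rw [Finset.mem_range] at hk
        rcases Sym2.mem_iff.1 hye with rfl | rfl
        · exact Finset.mem_image.2 ⟨2 * k, Finset.mem_range.2 (by omega), rfl⟩
        · exact Finset.mem_image.2 ⟨2 * k + 1, Finset.mem_range.2 (by omega), rfl⟩
  · -- M' is a perfect matching on S
    refine ⟨⟨?_, ?_⟩, ?_⟩
    · intro e hee
      obtain ⟨k, hk, rfl⟩ := Finset.mem_image.1 hee
      rw [Finset.mem_range] at hk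
      exact hadj (2 * k + 1) (by omega)
    · intro e hee f hff hef y hye hyf
      obtain ⟨k, hk, rfl⟩ := Finset.mem_image.1 hee
      obtain ⟨l, hl, rfl⟩ := Finset.mem_image.1 hff
      rw [Finset.mem_range] at hk hl
      have hkl : k = l := by
        rcases Sym2.mem_iff.1 hye with rfl | rfl <;> rcases Sym2.mem_iff.1 hyf with h | h
        · have := hinj1 (2 * k + 1) (2 * l + 1) (by omega) (by omega) (by omega) (by omega) h
          omega
        · have := hinj1 (2 * k + 1) (2 * l + 2) (by omega) (by omega) (by omega) (by omega) h
          omega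
        · have := hinj1 (2 * k + 2) (2 * l + 1) (by omega) (by omega) (by omega) (by omega) h
          omega
        · have := hinj1 (2 * k + 2) (2 * l + 2) (by omega) (by omega) (by omega) (by omega) h
          omega
      exact hef (by rw [hkl])
    · intro y
      constructor
      · intro hy
        obtain ⟨t, ht, rfl⟩ := Finset.mem_image.1 hy
        rw [Finset.mem_range] at ht
        rcases Nat.eq_zero_or_pos t with rfl | ht1
        · refine ⟨s(x (2 * (m - 1) + 1), x (2 * (m - 1) + 2)),
            Finset.mem_image.2 ⟨m - 1, Finset.mem_range.2 (by omega), rfl⟩, ?_⟩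
          have hxx : x (2 * (m - 1) + 2) = x 0 := by
            rw [show 2 * (m - 1) + 2 = c.length by omega, hxn, hx0]
          rw [hxx]
          simp
        · rcases Nat.even_or_odd t with ⟨k, hk⟩ | ⟨k, hk⟩
          · refine ⟨s(x (2 * (k - 1) + 1), x (2 * (k - 1) + 2)),
              Finset.mem_image.2 ⟨k - 1, Finset.mem_range.2 (by omega), rfl⟩, ?_⟩
            rw [show 2 * (k - 1) + 2 = t by omega]
            simp
          · refine ⟨s(x (2 * k + 1), x (2 * k + 2)),
              Finset.mem_image.2 ⟨k, Finset.mem_range.2 (by omega), rfl⟩, ?_⟩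
            rw [show 2 * k + 1 = t by omega]
            simp
      · rintro ⟨e, hee, hye⟩
        obtain ⟨k, hk, rfl⟩ := Finset.mem_image.1 hee
        rw [Finset.mem_range] at hk
        rcases Sym2.mem_iff.1 hye with rfl | rfl
        · exact Finset.mem_image.2 ⟨2 * k + 1, Finset.mem_range.2 (by omega), rfl⟩
        · rcases lt_or_eq_of_le (show 2 * k + 2 <= 2 * m by omega) with h | h
          · exact Finset.mem_image.2 ⟨2 * k + 2, Finset.mem_range.2 (by omega), rfl⟩
          · have hxx : x 0 = x (2 * k + 2) := by
              rw [show 2 * k + 2 = c.length by omega, hxn, hx0]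
            exact Finset.mem_image.2 ⟨0, Finset.mem_range.2 (by omega), hxx⟩

end Wrap

section Count

open Classical in
lemma pmPoly_coeff [Fintype V] (G : SimpleGraph V) (k : ℕ) :
    (pmPoly G Finset.univ).coeff k =
      ((Finset.univ.powerset.filter
        (fun S : Finset V => IsPMS G S ∧ k = S.card / 2)).card : ℤ) := by
  classical
  rw [pmPoly, finset_sum_coeff, ← Finset.sum_boole]
  refine Finset.sum_congr rfl ?_
  intro S _
  by_cases h : IsPMS G S
  · rw [if_pos h, coeff_X_pow]
    by_cases hk : k = S.card / 2
    · rw [if_pos hk, if_pos ⟨h, hk⟩]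
    · rw [if_neg hk, if_neg (fun hh => hk hh.2)]
  · rw [if_neg h, coeff_zero, if_neg (fun hh => h hh.1)]

open Classical in
lemma matchPoly_coeff [Fintype V] [DecidableEq V] (G : SimpleGraph V) (k : ℕ) :
    (matchPoly G).coeff k =
      ((Finset.univ.filter
        (fun N : Finset (Sym2 V) => IsGraphMatching G N ∧ k = N.card)).card : ℤ) := by
  classical
  rw [matchPoly, finset_sum_coeff, ← Finset.sum_boole]
  refine Finset.sum_congr rfl ?_
  intro N _
  by_cases h : IsGraphMatching G N
  · rw [if_pos h, coeff_X_pow]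
    by_cases hk : k = N.card
    · rw [if_pos hk, if_pos ⟨h, hk⟩]
    · rw [if_neg hk, if_neg (fun hh => hk hh.2)]
  · rw [if_neg h, coeff_zero, if_neg (fun hh => h hh.1)]

end Count

/-- `p(G; z) = m(G; z)` iff `G` contains no cycle of even length. -/
theorem stmt0 [Fintype V] [DecidableEq V] (G : SimpleGraph V) :
    pmPoly G Finset.univ = matchPoly G ↔ NoEvenCycle G := by
  classical
  have hsupp : ∀ N : Finset (Sym2 V),
      Covers N (Finset.univ.filter (fun x => ∃ e ∈ N, x ∈ e)) := by
    intro N x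
    simp [Finset.mem_filter]
  constructor
  · -- p = m implies no even cycle
    intro heq v c hcyc hev
    obtain ⟨S, M, M', hMne, ⟨hM, hMc⟩, ⟨hM', hM'c⟩⟩ := two_matchings_of_even_cycle c hcyc hev
    set k := M.card with hk
    have hcard : S.card = 2 * M.card := covers_card hM hMc
    have hcard' : S.card = 2 * M'.card := covers_card hM' hM'c
    have hk' : M'.card = k := by omega
    set pms := Finset.univ.powerset.filter
      (fun S : Finset V => IsPMS G S ∧ k = S.card / 2) with hpms
    set mts := Finset.univ.filter
      (fun N : Finset (Sym2 V) => IsGraphMatching G N ∧ k = N.card) with hmts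
    have himage : pms = mts.image (fun N => Finset.univ.filter (fun x => ∃ e ∈ N, x ∈ e)) := by
      ext T
      simp only [hpms, hmts, Finset.mem_filter, Finset.mem_image, Finset.mem_powerset,
        Finset.mem_univ, true_and]
      constructor
      · rintro ⟨hTsub, ⟨N, hNm, hNc⟩, hkT⟩
        refine ⟨N, ⟨hNm, ?_⟩, covers_eq (hsupp N) hNc⟩
        have := covers_card hNm hNc
        omega
      · rintro ⟨N, ⟨hNm, hNk⟩, rfl⟩
        refine ⟨Finset.filter_subset _ _, ⟨N, hNm, hsupp N⟩, ?_⟩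
        have := covers_card hNm (hsupp N)
        omega
    have hMmem : M ∈ mts := by
      rw [hmts, Finset.mem_filter]
      exact ⟨Finset.mem_univ _, hM, rfl⟩
    have hM'mem : M' ∈ mts := by
      rw [hmts, Finset.mem_filter]
      exact ⟨Finset.mem_univ _, hM', hk'.symm⟩
    have hsuppM : Finset.univ.filter (fun x => ∃ e ∈ M, x ∈ e) = S := covers_eq (hsupp M) hMc
    have hsuppM' : Finset.univ.filter (fun x => ∃ e ∈ M', x ∈ e) = S := covers_eq (hsupp M') hM'c
    have himage2 : mts.image (fun N => Finset.univ.filter (fun x => ∃ e ∈ N, x ∈ e)) =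
        (mts.erase M').image (fun N => Finset.univ.filter (fun x => ∃ e ∈ N, x ∈ e)) := by
      apply Finset.Subset.antisymm
      · intro T hT
        obtain ⟨N, hN, rfl⟩ := Finset.mem_image.1 hT
        by_cases hNM' : N = M'
        · subst hNM'
          exact Finset.mem_image.2 ⟨M, Finset.mem_erase.2 ⟨hMne, hMmem⟩,
            hsuppM.trans hsuppM'.symm⟩
        · exact Finset.mem_image.2 ⟨N, Finset.mem_erase.2 ⟨hNM', hN⟩, rfl⟩
      · exact Finset.image_subset_image (Finset.erase_subset _ _)
    have hlt : pms.card < mts.card := by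
      rw [himage, himage2]
      calc ((mts.erase M').image _).card ≤ (mts.erase M').card := Finset.card_image_le
        _ < mts.card := Finset.card_erase_lt_of_mem hM'mem
    have hco : (pmPoly G Finset.univ).coeff k = (matchPoly G).coeff k := by rw [heq]
    rw [pmPoly_coeff G k, matchPoly_coeff G k, ← hpms, ← hmts] at hco
    have : pms.card = mts.card := by exact_mod_cast hco
    omega
  · -- no even cycle implies p = m
    intro hno
    have h1 : pmPoly G Finset.univ =
        ∑ S ∈ Finset.univ.powerset.filter (fun S => IsPMS G S), (X : Polynomial ℤ) ^ (S.card / 2) := by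
      rw [pmPoly]
      exact (Finset.sum_filter _ _).symm
    have h2 : matchPoly G =
        ∑ M ∈ Finset.univ.filter (fun M => IsGraphMatching G M), (X : Polynomial ℤ) ^ M.card := by
      rw [matchPoly]
      exact (Finset.sum_filter _ _).symm
    rw [h1, h2]
    refine (Finset.sum_bij (fun N _ => Finset.univ.filter (fun x => ∃ e ∈ N, x ∈ e))
      ?_ ?_ ?_ ?_).symm
    · intro N hN
      rw [Finset.mem_filter] at hN
      rw [Finset.mem_filter]
      exact ⟨Finset.mem_powerset.2 (Finset.filter_subset _ _), N, hN.2, hsupp N⟩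
    · intro N hN N' hN' hNN'
      rw [Finset.mem_filter] at hN hN'
      have hNN'' : Finset.univ.filter (fun x => ∃ e ∈ N, x ∈ e) =
          Finset.univ.filter (fun x => ∃ e ∈ N', x ∈ e) := hNN'
      exact matching_eq_of_covers hno hN.2 hN'.2 (hsupp N) (hNN'' ▸ hsupp N')
    · intro T hT
      rw [Finset.mem_filter] at hT
      obtain ⟨N, hNm, hNc⟩ := hT.2
      exact ⟨N, Finset.mem_filter.2 ⟨Finset.mem_univ _, hNm⟩, covers_eq (hsupp N) hNc⟩
    · intro N hN
      rw [Finset.mem_filter] at hN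
      rw [covers_card hN.2 (hsupp N)]
      norm_num
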